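/- Price's theorem (1-D case): for a Gaussian density N(w; μ, σ²) and a twice continuously differentiable function h with suitable integrability and decay, d/d(σ²) E_{N(μ,σ²)}[h(w)] = (1/2)·E_{N(μ,σ²)}[h''(w)]. -/

import Mathlib

open MeasureTheory Real Filter

noncomputable def gauss (μ s w : ℝ) : ℝ :=
  (Real.sqrt (2 * Real.pi * s))⁻¹ * Real.exp (-(w - μ) ^ 2 / (2 * s))

lemma gauss_pos (μ s w : ℝ) (hs : 0 < s) : 0 < gauss μ s w := by
  unfold gauss
  have : 0 < Real.sqrt (2 * Real.pi * s) := Real.sqrt_pos.2 (by positivity)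
  positivity

lemma inner_hasDerivAt (μ s w : ℝ) (hs : 0 < s) :
    HasDerivAt (fun w : ℝ => -(w - μ) ^ 2 / (2 * s)) (-(w - μ) / s) w := by
  have h1 : HasDerivAt (fun w : ℝ => (w - μ) ^ 2) (2 * (w - μ)) w := by
    simpa using ((hasDerivAt_id w).sub_const μ).fun_pow 2
  have := (h1.neg).div_const (2 * s)
  refine this.congr_deriv ?_
  field_simp

lemma gauss_hasDerivAt_w (μ s w : ℝ) (hs : 0 < s) :
    HasDerivAt (fun w => gauss μ s w) (gauss μ s w * (-(w - μ) / s)) w := by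
  have := ((inner_hasDerivAt μ s w hs).exp).const_mul (Real.sqrt (2 * Real.pi * s))⁻¹
  refine this.congr_deriv ?_
  unfold gauss; ring

lemma gauss_hasDerivAt_w2 (μ s w : ℝ) (hs : 0 < s) :
    HasDerivAt (fun w => gauss μ s w * (-(w - μ) / s))
      (gauss μ s w * (((w - μ) ^ 2 - s) / s ^ 2)) w := by
  have hlin : HasDerivAt (fun w : ℝ => -(w - μ) / s) (-1 / s) w := by
    simpa using (((hasDerivAt_id w).sub_const μ).neg).div_const s
  have := (gauss_hasDerivAt_w μ s w hs).mul hlin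
  refine this.congr_deriv ?_
  field_simp
  ring

lemma gauss_hasDerivAt_s (μ s w : ℝ) (hs : 0 < s) :
    HasDerivAt (fun s => gauss μ s w) (gauss μ s w * (((w - μ) ^ 2 - s) / (2 * s ^ 2))) s := by
  have h2pis : (0:ℝ) < 2 * Real.pi * s := by positivity
  have hsqrt : (0:ℝ) < Real.sqrt (2 * Real.pi * s) := Real.sqrt_pos.2 h2pis
  have h1 : HasDerivAt (fun s : ℝ => 2 * Real.pi * s) (2 * Real.pi) s := by
    simpa using (hasDerivAt_id s).const_mul (2 * Real.pi)
  have h2 : HasDerivAt (fun s : ℝ => Real.sqrt (2 * Real.pi * s))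
      (1 / (2 * Real.sqrt (2 * Real.pi * s)) * (2 * Real.pi)) s :=
    (Real.hasDerivAt_sqrt (ne_of_gt h2pis)).comp s h1
  have h3 : HasDerivAt (fun s : ℝ => (Real.sqrt (2 * Real.pi * s))⁻¹)
      (-(1 / (2 * Real.sqrt (2 * Real.pi * s)) * (2 * Real.pi)) /
        (Real.sqrt (2 * Real.pi * s)) ^ 2) s := h2.inv (ne_of_gt hsqrt)
  -- exponential part
  have h4 : HasDerivAt (fun s : ℝ => 2 * s) 2 s := by
    simpa using (hasDerivAt_id s).const_mul (2:ℝ)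
  have h5 : HasDerivAt (fun s : ℝ => (2 * s)⁻¹) (-2 / (2 * s) ^ 2) s :=
    h4.inv (by positivity)
  have h6 : HasDerivAt (fun s : ℝ => -(w - μ) ^ 2 / (2 * s))
      (-(w - μ) ^ 2 * (-2 / (2 * s) ^ 2)) s := by
    simp only [div_eq_mul_inv]
    exact h5.const_mul _
  have h7 := (h6.exp)
  have := h3.mul h7
  refine this.congr_deriv ?_
  unfold gauss
  have hsq : (Real.sqrt (2 * Real.pi * s)) ^ 2 = 2 * Real.pi * s := Real.sq_sqrt h2pis.le
  rw [hsq]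
  have hpi : (0:ℝ) < Real.pi := Real.pi_pos
  field_simp
  ring

lemma gauss_bound (μ σ2 : ℝ) (hσ : 0 < σ2) :
    ∃ K : ℝ, 0 ≤ K ∧ ∀ s w : ℝ, σ2 / 2 ≤ s → s ≤ 3 * σ2 / 2 →
      |gauss μ s w * (((w - μ) ^ 2 - s) / (2 * s ^ 2))| ≤ K * gauss μ (2 * σ2) w := by
  have hpi := Real.pi_pos
  refine ⟨(Real.sqrt (Real.pi * σ2))⁻¹ * (2 / σ2 ^ 2) * (27 * σ2 / 2) *
      Real.sqrt (2 * Real.pi * (2 * σ2)), by positivity, ?_⟩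
  intro s w hs1 hs2
  have hs0 : 0 < s := lt_of_lt_of_le (by positivity) hs1
  set x := w - μ with hx
  have hg : 0 < gauss μ s w := gauss_pos μ s w hs0
  have hx2 : (0:ℝ) ≤ x ^ 2 := sq_nonneg x
  -- step 1: |g * ((x²-s)/(2s²))| ≤ g * ((x²+s)/(2s²))
  have step1 : |gauss μ s w * ((x ^ 2 - s) / (2 * s ^ 2))| ≤
      gauss μ s w * ((x ^ 2 + s) / (2 * s ^ 2)) := by
    rw [abs_mul, abs_of_pos hg, abs_div, abs_of_pos (by positivity : (0:ℝ) < 2 * s ^ 2)]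
    have : |x ^ 2 - s| ≤ x ^ 2 + s := by
      rw [abs_le]; constructor <;> nlinarith
    gcongr
  -- step 2: bound gauss factor
  have step2 : gauss μ s w ≤ (Real.sqrt (Real.pi * σ2))⁻¹ * Real.exp (-x ^ 2 / (3 * σ2)) := by
    unfold gauss
    rw [← hx]
    have e1 : (Real.sqrt (2 * Real.pi * s))⁻¹ ≤ (Real.sqrt (Real.pi * σ2))⁻¹ := by
      have : Real.sqrt (Real.pi * σ2) ≤ Real.sqrt (2 * Real.pi * s) :=
        Real.sqrt_le_sqrt (by nlinarith)
      have hp : (0:ℝ) < Real.sqrt (Real.pi * σ2) := Real.sqrt_pos.2 (by positivity)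
      exact inv_anti₀ hp this
    have e2 : Real.exp (-x ^ 2 / (2 * s)) ≤ Real.exp (-x ^ 2 / (3 * σ2)) := by
      apply Real.exp_le_exp.2
      rw [neg_div, neg_div, neg_le_neg_iff]
      apply div_le_div_of_nonneg_left hx2 (by positivity) (by linarith)
    have := mul_le_mul e1 e2 (Real.exp_pos _).le (by positivity)
    exact this
  -- step 3: bound rational factor
  have step3 : (x ^ 2 + s) / (2 * s ^ 2) ≤ (2 / σ2 ^ 2) * (x ^ 2 + 3 * σ2 / 2) := by
    rw [show (2 / σ2 ^ 2) * (x ^ 2 + 3 * σ2 / 2) = (x ^ 2 + 3 * σ2 / 2) / (σ2 ^ 2 / 2) from by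
      ring]
    exact div_le_div₀ (by positivity) (by linarith) (by positivity) (by nlinarith)
  -- step 4: exp(-x²/(3σ2)) * (x² + 3σ2/2) ≤ (27σ2/2) * exp(-x²/(4σ2))
  have step4 : Real.exp (-x ^ 2 / (3 * σ2)) * (x ^ 2 + 3 * σ2 / 2) ≤
      (27 * σ2 / 2) * Real.exp (-x ^ 2 / (4 * σ2)) := by
    have ht : x ^ 2 / (12 * σ2) ≤ Real.exp (x ^ 2 / (12 * σ2)) := by
      have := Real.add_one_le_exp (x ^ 2 / (12 * σ2)); linarith
    have hxb : x ^ 2 ≤ 12 * σ2 * Real.exp (x ^ 2 / (12 * σ2)) := by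
      have h12 : (0:ℝ) < 12 * σ2 := by positivity
      calc x ^ 2 = 12 * σ2 * (x ^ 2 / (12 * σ2)) := by field_simp
        _ ≤ 12 * σ2 * Real.exp (x ^ 2 / (12 * σ2)) := by gcongr
    have hsplit : Real.exp (-x ^ 2 / (3 * σ2)) =
        Real.exp (-x ^ 2 / (4 * σ2)) * Real.exp (-(x ^ 2 / (12 * σ2))) := by
      rw [← Real.exp_add]; congr 1; field_simp; ring
    rw [hsplit]
    have he4 : (0:ℝ) < Real.exp (-x ^ 2 / (4 * σ2)) := Real.exp_pos _
    have he12 : (0:ℝ) < Real.exp (-(x ^ 2 / (12 * σ2))) := Real.exp_pos _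
    have hr : Real.exp (-(x ^ 2 / (12 * σ2))) * x ^ 2 ≤ 12 * σ2 := by
      rw [Real.exp_neg]
      rw [inv_mul_le_iff₀ (Real.exp_pos _)]
      calc x ^ 2 ≤ 12 * σ2 * Real.exp (x ^ 2 / (12 * σ2)) := hxb
        _ = Real.exp (x ^ 2 / (12 * σ2)) * (12 * σ2) := by ring
    have hr2 : Real.exp (-(x ^ 2 / (12 * σ2))) * (3 * σ2 / 2) ≤ 3 * σ2 / 2 := by
      nlinarith [Real.exp_le_one_iff.2 (neg_nonpos.2 (by positivity : (0:ℝ) ≤ x ^ 2 / (12 * σ2)))]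
    nlinarith
  -- combine
  have gpos2 : 0 < gauss μ (2 * σ2) w := gauss_pos μ (2 * σ2) w (by positivity)
  have hfinal : Real.exp (-x ^ 2 / (4 * σ2)) =
      Real.sqrt (2 * Real.pi * (2 * σ2)) * gauss μ (2 * σ2) w := by
    unfold gauss
    rw [← hx]
    have hsq : (0:ℝ) < Real.sqrt (2 * Real.pi * (2 * σ2)) := Real.sqrt_pos.2 (by positivity)
    rw [← mul_assoc, mul_inv_cancel₀ (ne_of_gt hsq), one_mul]
    congr 2
    ring
  calc |gauss μ s w * ((x ^ 2 - s) / (2 * s ^ 2))|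
      ≤ gauss μ s w * ((x ^ 2 + s) / (2 * s ^ 2)) := step1
    _ ≤ ((Real.sqrt (Real.pi * σ2))⁻¹ * Real.exp (-x ^ 2 / (3 * σ2))) *
        ((2 / σ2 ^ 2) * (x ^ 2 + 3 * σ2 / 2)) := by
        apply mul_le_mul step2 step3 (by positivity) (by positivity)
    _ = (Real.sqrt (Real.pi * σ2))⁻¹ * (2 / σ2 ^ 2) *
        (Real.exp (-x ^ 2 / (3 * σ2)) * (x ^ 2 + 3 * σ2 / 2)) := by ring
    _ ≤ (Real.sqrt (Real.pi * σ2))⁻¹ * (2 / σ2 ^ 2) *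
        ((27 * σ2 / 2) * Real.exp (-x ^ 2 / (4 * σ2))) := by
        apply mul_le_mul_of_nonneg_left step4 (by positivity)
    _ = (Real.sqrt (Real.pi * σ2))⁻¹ * (2 / σ2 ^ 2) * (27 * σ2 / 2) *
        Real.sqrt (2 * Real.pi * (2 * σ2)) * gauss μ (2 * σ2) w := by
        rw [hfinal]; ring

/-- Price's theorem (1-D case): for the Gaussian density `N(w; μ, s)` with
variance `s` and a twice continuously differentiable `h` with suitable
integrability and decay, `d/ds E_{N(μ,s)}[h(w)] = ½ E_{N(μ,s)}[h''(w)]`. -/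
theorem price_1d (μ : ℝ) (h : ℝ → ℝ) (hh : ContDiff ℝ 2 h)
    (N : ℝ → ℝ → ℝ)
    (hN : ∀ s w, N s w
      = (Real.sqrt (2 * Real.pi * s))⁻¹ * Real.exp (-(w - μ) ^ 2 / (2 * s)))
    (σ2 : ℝ) (hσ : 0 < σ2)
    (hint : ∀ s, 0 < s → Integrable (fun w => h w * N s w))
    (hint1 : ∀ s, 0 < s → Integrable (fun w => deriv h w * N s w))
    (hint2 : ∀ s, 0 < s → Integrable (fun w => deriv (deriv h) w * N s w))
    (hdecay1_top : ∀ s, 0 < s →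
      Tendsto (fun w => h w * deriv (fun w' => N s w') w) atTop (nhds 0))
    (hdecay1_bot : ∀ s, 0 < s →
      Tendsto (fun w => h w * deriv (fun w' => N s w') w) atBot (nhds 0))
    (hdecay2_top : ∀ s, 0 < s →
      Tendsto (fun w => deriv h w * N s w) atTop (nhds 0))
    (hdecay2_bot : ∀ s, 0 < s →
      Tendsto (fun w => deriv h w * N s w) atBot (nhds 0)) :
    HasDerivAt (fun s => ∫ w, h w * N s w)
      ((1/2) * ∫ w, deriv (deriv h) w * N σ2 w) σ2 := by
  have hg : ∀ s w, N s w = gauss μ s w := hN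
  simp only [hg] at hint hint1 hint2 hdecay1_top hdecay1_bot hdecay2_top hdecay2_bot ⊢
  obtain ⟨K, hK0, hKb⟩ := gauss_bound μ σ2 hσ
  have hc : Continuous h := hh.continuous
  set F' : ℝ → ℝ → ℝ :=
    fun s w => h w * (gauss μ s w * (((w - μ) ^ 2 - s) / (2 * s ^ 2))) with hF'
  have key : Integrable (F' σ2) volume ∧
      HasDerivAt (fun s => ∫ w, h w * gauss μ s w) (∫ w, F' σ2 w) σ2 := by
    apply hasDerivAt_integral_of_dominated_loc_of_deriv_le
      (s := Metric.ball σ2 (σ2 / 2)) (bound := fun w => K * |h w * gauss μ (2 * σ2) w|)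
    · exact Metric.ball_mem_nhds _ (by positivity)
    · filter_upwards [eventually_gt_nhds hσ] with s hs
      exact (hint s hs).aestronglyMeasurable
    · exact hint σ2 hσ
    · apply Continuous.aestronglyMeasurable
      unfold F'
      unfold gauss
      fun_prop
    · apply Eventually.of_forall
      intro w s hs
      rw [Metric.mem_ball, Real.dist_eq, abs_lt] at hs
      have hs1 : σ2 / 2 ≤ s := by linarith [hs.1]
      have hs2 : s ≤ 3 * σ2 / 2 := by linarith [hs.2]
      have hb := hKb s w hs1 hs2
      have gpos2 : 0 < gauss μ (2 * σ2) w := gauss_pos μ (2 * σ2) w (by positivity)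
      calc ‖F' s w‖ = |h w| * |gauss μ s w * (((w - μ) ^ 2 - s) / (2 * s ^ 2))| := by
            rw [hF', Real.norm_eq_abs, abs_mul]
        _ ≤ |h w| * (K * gauss μ (2 * σ2) w) :=
            mul_le_mul_of_nonneg_left hb (abs_nonneg _)
        _ = K * |h w * gauss μ (2 * σ2) w| := by
            rw [abs_mul, abs_of_pos gpos2]; ring
    · exact ((hint (2 * σ2) (by positivity)).abs.const_mul K)
    · apply Eventually.of_forall
      intro w s hs
      rw [Metric.mem_ball, Real.dist_eq, abs_lt] at hs
      have hs0 : 0 < s := by linarith [hs.1]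
      exact (gauss_hasDerivAt_s μ s w hs0).const_mul (h w)
  obtain ⟨hF'int, hderiv⟩ := key
  suffices hsuff : ∫ w, F' σ2 w = (1/2) * ∫ w, deriv (deriv h) w * gauss μ σ2 w by
    rw [← hsuff]; exact hderiv
  -- integration by parts (twice), via FTC on the whole line
  have hd1 : Differentiable ℝ h := hh.differentiable (by norm_num)
  have hh2 : ContDiff ℝ (1 + 1 : ℕ) h := by exact_mod_cast hh
  have hd2 : Differentiable ℝ (deriv h) :=
    (((contDiff_succ_iff_deriv (n := 1)).mp (by exact_mod_cast hh2)).2.2).differentiable (by norm_num)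
  set G : ℝ → ℝ := fun w => h w * (gauss μ σ2 w * (-(w - μ) / σ2)) -
    deriv h w * gauss μ σ2 w with hG
  set G' : ℝ → ℝ := fun w => h w * (gauss μ σ2 w * (((w - μ) ^ 2 - σ2) / σ2 ^ 2)) -
    deriv (deriv h) w * gauss μ σ2 w with hG'
  have hGd : ∀ w, HasDerivAt G (G' w) w := by
    intro w
    have t1 := ((hd1 w).hasDerivAt).mul (gauss_hasDerivAt_w2 μ σ2 w hσ)
    have t2 := ((hd2 w).hasDerivAt).mul (gauss_hasDerivAt_w μ σ2 w hσ)
    have := t1.sub t2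
    refine this.congr_deriv ?_
    rw [hG']
    ring
  have h2int : Integrable (fun w => h w * (gauss μ σ2 w * (((w - μ) ^ 2 - σ2) / σ2 ^ 2))) := by
    have heq : (fun w => h w * (gauss μ σ2 w * (((w - μ) ^ 2 - σ2) / σ2 ^ 2))) =
        fun w => 2 * F' σ2 w := by
      funext w; rw [hF']; ring
    rw [heq]
    exact hF'int.const_mul 2
  have hGint : Integrable G' := h2int.sub (hint2 σ2 hσ)
  have ederiv : ∀ w, deriv (fun w' => gauss μ σ2 w') w = gauss μ σ2 w * (-(w - μ) / σ2) :=
    fun w => (gauss_hasDerivAt_w μ σ2 w hσ).deriv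
  have htop : Tendsto G atTop (nhds 0) := by
    have d1 := hdecay1_top σ2 hσ
    simp only [ederiv] at d1
    have := d1.sub (hdecay2_top σ2 hσ)
    rw [hG]
    simpa only [sub_zero] using this
  have hbot : Tendsto G atBot (nhds 0) := by
    have d1 := hdecay1_bot σ2 hσ
    simp only [ederiv] at d1
    have := d1.sub (hdecay2_bot σ2 hσ)
    rw [hG]
    simpa only [sub_zero] using this
  have hzero : ∫ w, G' w = 0 := by
    have := integral_of_hasDerivAt_of_tendsto hGd hGint hbot htop
    simpa using this
  rw [hG'] at hzero
  rw [integral_sub h2int (hint2 σ2 hσ), sub_eq_zero] at hzero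
  have hhalf : ∀ w, F' σ2 w =
      (1/2) * (h w * (gauss μ σ2 w * (((w - μ) ^ 2 - σ2) / σ2 ^ 2))) := by
    intro w; rw [hF']; ring
  calc ∫ w, F' σ2 w
      = ∫ w, (1/2) * (h w * (gauss μ σ2 w * (((w - μ) ^ 2 - σ2) / σ2 ^ 2))) := by
        simp only [hhalf]
    _ = (1/2) * ∫ w, h w * (gauss μ σ2 w * (((w - μ) ^ 2 - σ2) / σ2 ^ 2)) :=
        integral_const_mul _ _
    _ = (1/2) * ∫ w, deriv (deriv h) w * gauss μ σ2 w := by rw [hzero]
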